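/- Let ν be a finite Borel measure on B. Assume that for each l ∈ B and v ∈ L² there is a continuous Φ(·,l,v) : [0,1] → L² satisfying Φ(t,l,v) = v + l ∫₀ᵗ ḡ(Φ(s,l,v)) ds for all t ∈ [0,1], depending measurably on l, and define H(l,v) := Φ(1,l,v) − v − l ḡ(v) and b(v) := ∫_B H(l,v) ν(dl) (a Bochner integral in L²). Then there exists a constant C > 0, depending only on h, μ and ν, such that for all u, v ∈ L²: ‖b(u) − b(v)‖_{L²} ≤ C ‖u − v‖_{L²} and ‖b(v)‖_{L²} ≤ C (1 + ‖v‖_{L²}). -/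

import Mathlib

open MeasureTheory
open scoped RealInnerProductSpace ENNReal

/-- The cross product on `ℝ³ = EuclideanSpace ℝ (Fin 3)`. -/
noncomputable def cross3 (a b : EuclideanSpace ℝ (Fin 3)) : EuclideanSpace ℝ (Fin 3) :=
  WithLp.toLp 2 ![a 1 * b 2 - a 2 * b 1, a 2 * b 0 - a 0 * b 2, a 0 * b 1 - a 1 * b 0]

lemma cross3_sub_left (a b c : EuclideanSpace ℝ (Fin 3)) :
    cross3 (a - b) c = cross3 a c - cross3 b c := by
  ext i
  have ha : ∀ j, (a - b : EuclideanSpace ℝ (Fin 3)) j = a j - b j := fun j => rfl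
  fin_cases i <;>
    simp [cross3, ha, Matrix.cons_val_zero, Matrix.cons_val_one] <;> ring

lemma norm_sq_eq3 (a : EuclideanSpace ℝ (Fin 3)) :
    ‖a‖ ^ 2 = (a 0)^2 + (a 1)^2 + (a 2)^2 := by
  rw [EuclideanSpace.norm_eq, Real.sq_sqrt (by positivity)]
  simp [Fin.sum_univ_three, Real.norm_eq_abs, sq_abs]

lemma norm_cross3_le (a b : EuclideanSpace ℝ (Fin 3)) :
    ‖cross3 a b‖ ≤ 4 * (‖a‖ * ‖b‖) := by
  have h1 := norm_sq_eq3 a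
  have h2 := norm_sq_eq3 b
  have h3 := norm_sq_eq3 (cross3 a b)
  have hc0 : (cross3 a b) 0 = a 1 * b 2 - a 2 * b 1 := rfl
  have hc1 : (cross3 a b) 1 = a 2 * b 0 - a 0 * b 2 := rfl
  have hc2 : (cross3 a b) 2 = a 0 * b 1 - a 1 * b 0 := rfl
  have hsq : ‖cross3 a b‖ ^ 2 ≤ (4 * (‖a‖ * ‖b‖)) ^ 2 := by
    rw [h3, hc0, hc1, hc2]
    nlinarith [norm_nonneg a, norm_nonneg b, sq_nonneg (a 0 * b 0 + a 1 * b 1 + a 2 * b 2),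
      sq_nonneg (‖a‖ * ‖b‖), mul_nonneg (norm_nonneg a) (norm_nonneg b),
      sq_nonneg (a 0 * b 1 + a 1 * b 0), sq_nonneg (a 1 * b 2 + a 2 * b 1),
      sq_nonneg (a 2 * b 0 + a 0 * b 2),
      sq_nonneg (a 0 * b 1 - a 1 * b 0), sq_nonneg (a 1 * b 2 - a 2 * b 1),
      sq_nonneg (a 2 * b 0 - a 0 * b 2)]
  nlinarith [hsq, norm_nonneg (cross3 a b), mul_nonneg (norm_nonneg a) (norm_nonneg b)]


set_option maxHeartbeats 1000000 in
theorem marcus_b_lipschitz_linear_growth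
    {𝒪 : Type*} [MeasurableSpace 𝒪] (μ : Measure 𝒪) [IsFiniteMeasure μ]
    (h : 𝒪 → EuclideanSpace ℝ (Fin 3)) (hmeas : Measurable h) (hbdd : MemLp h ⊤ μ)
    (gbar : Lp (EuclideanSpace ℝ (Fin 3)) 2 μ → Lp (EuclideanSpace ℝ (Fin 3)) 2 μ)
    (hgbar : ∀ v, ∀ᵐ x ∂μ, gbar v x = cross3 (v x) (h x) + h x)
    (ν : Measure ℝ) [IsFiniteMeasure ν] (hνB : ∀ᵐ l ∂ν, 0 < |l| ∧ |l| < 1)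
    (Φ : ℝ → ℝ → Lp (EuclideanSpace ℝ (Fin 3)) 2 μ → Lp (EuclideanSpace ℝ (Fin 3)) 2 μ)
    (hΦc : ∀ (l : ℝ), 0 < |l| → |l| < 1 →
      ∀ v, ContinuousOn (fun t => Φ t l v) (Set.Icc 0 1))
    (hΦeq : ∀ (l : ℝ), 0 < |l| → |l| < 1 →
      ∀ v, ∀ t ∈ Set.Icc (0:ℝ) 1, Φ t l v = v + l • ∫ s in (0:ℝ)..t, gbar (Φ s l v))
    (hΦmeas : ∀ v, AEStronglyMeasurable (fun l => Φ 1 l v) ν) :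
    ∃ C : ℝ, 0 < C ∧
      ∀ u v : Lp (EuclideanSpace ℝ (Fin 3)) 2 μ,
        ‖(∫ l, (Φ 1 l u - u - l • gbar u) ∂ν) - ∫ l, (Φ 1 l v - v - l • gbar v) ∂ν‖
            ≤ C * ‖u - v‖
        ∧ ‖∫ l, (Φ 1 l v - v - l • gbar v) ∂ν‖ ≤ C * (1 + ‖v‖) := by
  classical
  set M : ℝ := (eLpNorm h ⊤ μ).toReal with hM
  have hM0 : 0 ≤ M := ENNReal.toReal_nonneg
  set K : ℝ := 4 * M + 1 with hK
  have hK1 : 1 ≤ K := by simp [hK]; positivity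
  have hK0 : 0 < K := lt_of_lt_of_le one_pos hK1
  -- a.e. bound on h
  have hha : ∀ᵐ x ∂μ, ‖h x‖ ≤ M := by
    filter_upwards [ae_le_eLpNormEssSup (f := h) (μ := μ)] with x hx
    have hfin : eLpNormEssSup h μ ≠ ⊤ := by
      rw [← eLpNorm_exponent_top]; exact hbdd.2.ne
    have := ENNReal.toReal_mono hfin hx
    simpa [hM, eLpNorm_exponent_top, coe_nnnorm] using this
  -- Lipschitz bound for gbar
  have glip : ∀ u v : Lp (EuclideanSpace ℝ (Fin 3)) 2 μ,
      ‖gbar u - gbar v‖ ≤ K * ‖u - v‖ := by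
    intro u v
    apply Lp.norm_le_mul_norm_of_ae_le_mul
    filter_upwards [hgbar u, hgbar v, Lp.coeFn_sub (gbar u) (gbar v), Lp.coeFn_sub u v, hha]
      with x hu hv hsub hsub' hhx
    rw [hsub, Pi.sub_apply, hu, hv, hsub', Pi.sub_apply]
    have : cross3 (u x) (h x) + h x - (cross3 (v x) (h x) + h x)
        = cross3 (u x - v x) (h x) := by rw [cross3_sub_left]; abel
    rw [this]
    calc ‖cross3 (u x - v x) (h x)‖ ≤ 4 * (‖u x - v x‖ * ‖h x‖) := norm_cross3_le _ _
      _ ≤ K * ‖u x - v x‖ := by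
          have := norm_nonneg (u x - v x)
          nlinarith [mul_le_mul_of_nonneg_left hhx this]
  set C0 : ℝ := ‖gbar 0‖ with hC0
  have hC00 : 0 ≤ C0 := norm_nonneg _
  have ggrow : ∀ v : Lp (EuclideanSpace ℝ (Fin 3)) 2 μ, ‖gbar v‖ ≤ K * ‖v‖ + C0 := by
    intro v
    calc ‖gbar v‖ ≤ ‖gbar v - gbar 0‖ + ‖gbar 0‖ := by
          simpa using norm_add_le (gbar v - gbar 0) (gbar 0)
      _ ≤ K * ‖v‖ + C0 := by
          have := glip v 0
          simp only [sub_zero] at this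
          linarith
  have gcont : Continuous gbar := by
    refine (LipschitzWith.of_dist_le_mul (K := K.toNNReal) fun u v => ?_).continuous
    rw [dist_eq_norm, dist_eq_norm]
    simpa [Real.coe_toNNReal K hK0.le] using glip u v
  -- derivative of t ↦ Φ t l w
  have hΦ0 : ∀ (l : ℝ), 0 < |l| → |l| < 1 → ∀ w, Φ 0 l w = w := by
    intro l hl0 hl1 w
    have := hΦeq l hl0 hl1 w 0 ⟨le_rfl, zero_le_one⟩
    simpa using this
  have hderiv : ∀ (l : ℝ), 0 < |l| → |l| < 1 → ∀ w, ∀ t ∈ Set.Ico (0:ℝ) 1,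
      HasDerivWithinAt (fun t => Φ t l w) (l • gbar (Φ t l w)) (Set.Ici t) t := by
    intro l hl0 hl1 w t ht
    have Gcont : ContinuousOn (fun s => gbar (Φ s l w)) (Set.Icc 0 1) :=
      gcont.comp_continuousOn (hΦc l hl0 hl1 w)
    have hint : IntervalIntegrable (fun s => gbar (Φ s l w)) volume 0 t := by
      apply (Gcont.mono ?_).intervalIntegrable
      rw [Set.uIcc_of_le ht.1]
      exact Set.Icc_subset_Icc le_rfl ht.2.le
    have hmem : Set.Icc (0:ℝ) 1 ∈ nhdsWithin t (Set.Ioi t) :=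
      Filter.mem_of_superset (Ioc_mem_nhdsGT_of_mem ⟨le_rfl, ht.2⟩)
        (fun r hr => ⟨ht.1.trans hr.1.le, hr.2⟩)
    have hmeasG : StronglyMeasurableAtFilter (fun s => gbar (Φ s l w))
        (nhdsWithin t (Set.Ioi t)) volume :=
      ⟨Set.Icc 0 1, hmem, Gcont.aestronglyMeasurable measurableSet_Icc⟩
    have hcw : ContinuousWithinAt (fun s => gbar (Φ s l w)) (Set.Ioi t) t :=
      (Gcont t ⟨ht.1, ht.2.le⟩).mono_of_mem_nhdsWithin hmem
    have hI : HasDerivWithinAt (fun r => ∫ s in (0:ℝ)..r, gbar (Φ s l w))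
        (gbar (Φ t l w)) (Set.Ici t) t :=
      intervalIntegral.integral_hasDerivWithinAt_right hint hmeasG hcw
    have hVI : HasDerivWithinAt (fun r => w + l • ∫ s in (0:ℝ)..r, gbar (Φ s l w))
        (l • gbar (Φ t l w)) (Set.Ici t) t := (hI.const_smul l).const_add w
    have heq : Set.EqOn (fun r => Φ r l w)
        (fun r => w + l • ∫ s in (0:ℝ)..r, gbar (Φ s l w)) (Set.Icc t 1) := fun r hr =>
      hΦeq l hl0 hl1 w r ⟨ht.1.trans hr.1, hr.2⟩
    exact ((hVI.mono Set.Icc_subset_Ici_self).congr heq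
      (hΦeq l hl0 hl1 w t ⟨ht.1, ht.2.le⟩)).mono_of_mem_nhdsWithin
      (Icc_mem_nhdsGE_of_mem ⟨le_rfl, ht.2⟩)
  set EK : ℝ := Real.exp K with hEK
  have hEK1 : 1 ≤ EK := by rw [hEK]; nlinarith [Real.add_one_le_exp K]
  -- Gronwall: Lipschitz in initial data
  have hlip : ∀ (l : ℝ), 0 < |l| → |l| < 1 → ∀ u v,
      ‖Φ 1 l u - Φ 1 l v‖ ≤ EK * ‖u - v‖ := by
    intro l hl0 hl1 u v
    have key := norm_le_gronwallBound_of_norm_deriv_right_le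
      (f := fun t => Φ t l u - Φ t l v)
      (f' := fun t => l • gbar (Φ t l u) - l • gbar (Φ t l v))
      (δ := ‖u - v‖) (K := K) (ε := 0) (a := 0) (b := 1)
      (((hΦc l hl0 hl1 u).sub (hΦc l hl0 hl1 v)))
      (fun t ht => (hderiv l hl0 hl1 u t ht).sub (hderiv l hl0 hl1 v t ht))
      (by show ‖Φ 0 l u - Φ 0 l v‖ ≤ ‖u - v‖
          rw [hΦ0 l hl0 hl1 u, hΦ0 l hl0 hl1 v])
      (fun t ht => by
        show ‖l • gbar (Φ t l u) - l • gbar (Φ t l v)‖ ≤ K * ‖Φ t l u - Φ t l v‖ + 0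
        rw [← smul_sub, norm_smul, Real.norm_eq_abs]
        have h1 : ‖gbar (Φ t l u) - gbar (Φ t l v)‖ ≤ K * ‖Φ t l u - Φ t l v‖ := glip _ _
        have h2 : |l| ≤ 1 := hl1.le
        have h3 : (0:ℝ) ≤ ‖gbar (Φ t l u) - gbar (Φ t l v)‖ := norm_nonneg _
        nlinarith [abs_nonneg l, norm_nonneg (Φ t l u - Φ t l v)])
      1 ⟨zero_le_one, le_rfl⟩
    simp only [sub_zero, gronwallBound_ε0, mul_one] at key
    rw [mul_comm] at key
    exact key
  -- Gronwall: linear growth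
  have hgrow : ∀ (l : ℝ), 0 < |l| → |l| < 1 → ∀ v,
      ‖Φ 1 l v‖ ≤ EK * (‖v‖ + C0) := by
    intro l hl0 hl1 v
    have key := norm_le_gronwallBound_of_norm_deriv_right_le
      (f := fun t => Φ t l v)
      (f' := fun t => l • gbar (Φ t l v))
      (δ := ‖v‖) (K := K) (ε := C0) (a := 0) (b := 1)
      (hΦc l hl0 hl1 v)
      (hderiv l hl0 hl1 v)
      (by show ‖Φ 0 l v‖ ≤ ‖v‖; rw [hΦ0 l hl0 hl1 v])
      (fun t ht => by
        show ‖l • gbar (Φ t l v)‖ ≤ K * ‖Φ t l v‖ + C0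
        rw [norm_smul, Real.norm_eq_abs]
        have h1 : ‖gbar (Φ t l v)‖ ≤ K * ‖Φ t l v‖ + C0 := ggrow _
        have h2 : |l| ≤ 1 := hl1.le
        nlinarith [abs_nonneg l, norm_nonneg (gbar (Φ t l v))])
      1 ⟨zero_le_one, le_rfl⟩
    simp only [sub_zero, gronwallBound_of_K_ne_0 hK0.ne', mul_one, ← hEK] at key
    have hdiv : C0 / K * (EK - 1) ≤ C0 * EK := by
      have h1 : C0 / K ≤ C0 := div_le_self hC00 hK1
      have h2 : EK - 1 ≤ EK := by linarith
      have := mul_le_mul h1 h2 (by linarith) hC00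
      linarith
    have := norm_nonneg v
    nlinarith [key]
  set T : ℝ := (ν Set.univ).toReal with hT
  have hT0 : 0 ≤ T := ENNReal.toReal_nonneg
  set C1 : ℝ := EK + 1 + K with hC1
  set C2 : ℝ := EK * (1 + C0) + 1 + K + C0 with hC2
  have hC1pos : 0 < C1 := by positivity
  have hC2pos : 0 < C2 := by positivity
  refine ⟨(C1 + C2 + 1) * (T + 1), by positivity, fun u v => ?_⟩
  have hCbig : ∀ c : ℝ, 0 < c → c ≤ C1 + C2 + 1 → c * T ≤ (C1 + C2 + 1) * (T + 1) := by
    intro c hc hcle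
    nlinarith
  -- measurability/integrability of H
  have Hmeas : ∀ w : Lp (EuclideanSpace ℝ (Fin 3)) 2 μ,
      AEStronglyMeasurable (fun l : ℝ => Φ 1 l w - w - l • gbar w) ν := by
    intro w
    exact ((hΦmeas w).sub aestronglyMeasurable_const).sub
      ((continuous_id.smul continuous_const).aestronglyMeasurable)
  have Hbound : ∀ w : Lp (EuclideanSpace ℝ (Fin 3)) 2 μ, ∀ᵐ l ∂ν,
      ‖Φ 1 l w - w - l • gbar w‖ ≤ C2 * (1 + ‖w‖) := by
    intro w
    filter_upwards [hνB] with l hl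
    obtain ⟨hl0, hl1⟩ := hl
    have h1 : ‖Φ 1 l w - w - l • gbar w‖ ≤ ‖Φ 1 l w‖ + ‖w‖ + ‖l • gbar w‖ := by
      calc ‖Φ 1 l w - w - l • gbar w‖ ≤ ‖Φ 1 l w - w‖ + ‖l • gbar w‖ := norm_sub_le _ _
        _ ≤ ‖Φ 1 l w‖ + ‖w‖ + ‖l • gbar w‖ := by
            have := norm_sub_le (Φ 1 l w) w; linarith
    have h2 : ‖Φ 1 l w‖ ≤ EK * (‖w‖ + C0) := hgrow l hl0 hl1 w
    have h3 : ‖l • gbar w‖ ≤ K * ‖w‖ + C0 := by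
      rw [norm_smul, Real.norm_eq_abs]
      have := ggrow w
      nlinarith [abs_nonneg l, hl1.le, norm_nonneg (gbar w)]
    have hw0 := norm_nonneg w
    rw [hC2]
    nlinarith [mul_nonneg hC00 hw0, mul_nonneg (mul_nonneg (by linarith : (0:ℝ) ≤ EK) hC00) hw0, hEK1, hC00, hK1]
  have Hint : ∀ w : Lp (EuclideanSpace ℝ (Fin 3)) 2 μ,
      Integrable (fun l : ℝ => Φ 1 l w - w - l • gbar w) ν := by
    intro w
    exact Integrable.mono' (integrable_const (C2 * (1 + ‖w‖))) (Hmeas w) (Hbound w)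
  constructor
  · -- Lipschitz estimate
    rw [← integral_sub (Hint u) (Hint v)]
    have hb : ∀ᵐ l ∂ν, ‖(Φ 1 l u - u - l • gbar u) - (Φ 1 l v - v - l • gbar v)‖
        ≤ C1 * ‖u - v‖ := by
      filter_upwards [hνB] with l hl
      obtain ⟨hl0, hl1⟩ := hl
      have hre : (Φ 1 l u - u - l • gbar u) - (Φ 1 l v - v - l • gbar v)
          = (Φ 1 l u - Φ 1 l v) - (u - v) - l • (gbar u - gbar v) := by
        rw [smul_sub]; abel
      rw [hre]
      have h1 : ‖(Φ 1 l u - Φ 1 l v) - (u - v) - l • (gbar u - gbar v)‖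
          ≤ ‖Φ 1 l u - Φ 1 l v‖ + ‖u - v‖ + ‖l • (gbar u - gbar v)‖ := by
        calc _ ≤ ‖(Φ 1 l u - Φ 1 l v) - (u - v)‖ + ‖l • (gbar u - gbar v)‖ := norm_sub_le _ _
          _ ≤ _ := by have := norm_sub_le (Φ 1 l u - Φ 1 l v) (u - v); linarith
      have h2 := hlip l hl0 hl1 u v
      have h3 : ‖l • (gbar u - gbar v)‖ ≤ K * ‖u - v‖ := by
        rw [norm_smul, Real.norm_eq_abs]
        have := glip u v
        nlinarith [abs_nonneg l, hl1.le, norm_nonneg (gbar u - gbar v)]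
      have := norm_nonneg (u - v)
      rw [hC1]
      nlinarith
    calc ‖∫ l, ((Φ 1 l u - u - l • gbar u) - (Φ 1 l v - v - l • gbar v)) ∂ν‖
        ≤ ∫ _, C1 * ‖u - v‖ ∂ν :=
          norm_integral_le_of_norm_le (integrable_const _) hb
      _ = T * (C1 * ‖u - v‖) := by rw [integral_const, smul_eq_mul]; rfl
      _ ≤ (C1 + C2 + 1) * (T + 1) * ‖u - v‖ := by
          have := hCbig C1 hC1pos (by linarith)
          nlinarith [norm_nonneg (u - v)]
  · -- growth estimate
    calc ‖∫ l, (Φ 1 l v - v - l • gbar v) ∂ν‖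
        ≤ ∫ _, C2 * (1 + ‖v‖) ∂ν :=
          norm_integral_le_of_norm_le (integrable_const _) (Hbound v)
      _ = T * (C2 * (1 + ‖v‖)) := by rw [integral_const, smul_eq_mul]; rfl
      _ ≤ (C1 + C2 + 1) * (T + 1) * (1 + ‖v‖) := by
          have := hCbig C2 hC2pos (by linarith)
          nlinarith [norm_nonneg v]
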